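/- For an infinite set Ω and any natural number n ≥ 2, every permutation of order n lies in the subgroup generated by S_{|Ω|,n}(Ω), i.e. ⟨I_n⟩ ⊆ ⟨S_{|Ω|,n}(Ω)⟩. -/

import Mathlib

open Cardinal

universe u

/-- `V` is a decomposition of the support of `f` into pairwise disjoint `f`-invariant sets. -/
def IsInvDecomp {Ω : Type u} (f : Equiv.Perm Ω) {ι : Type u} (V : ι → Set Ω) : Prop :=
  (∀ i, ∀ x ∈ V i, f x ∈ V i) ∧ Pairwise (Function.onFun Disjoint V) ∧
    (⋃ i, V i) = {x | f x ≠ x}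

/-- at most `α` invariant pieces, each of cardinality at most `β`. -/
def Wset (Ω : Type u) (α β : Cardinal.{u}) : Set (Equiv.Perm Ω) :=
  {f | ∃ (ι : Type u) (V : ι → Set Ω), IsInvDecomp f V ∧ #ι ≤ α ∧ ∀ i, #(V i) ≤ β}

/-- exactly `α` invariant pieces, each of cardinality at most `β`. -/
def Kset (Ω : Type u) (α β : Cardinal.{u}) : Set (Equiv.Perm Ω) :=
  {f | ∃ (ι : Type u) (V : ι → Set Ω), IsInvDecomp f V ∧ #ι = α ∧ ∀ i, #(V i) ≤ β}

/-- at most `α` invariant pieces, each of cardinality exactly `β`. -/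
def Rset (Ω : Type u) (α β : Cardinal.{u}) : Set (Equiv.Perm Ω) :=
  {f | ∃ (ι : Type u) (V : ι → Set Ω), IsInvDecomp f V ∧ #ι ≤ α ∧ ∀ i, #(V i) = β}

/-- exactly `α` invariant pieces, each of cardinality exactly `β`. -/
def Sset (Ω : Type u) (α β : Cardinal.{u}) : Set (Equiv.Perm Ω) :=
  {f | ∃ (ι : Type u) (V : ι → Set Ω), IsInvDecomp f V ∧ #ι = α ∧ ∀ i, #(V i) = β}

namespace SsetAux

open Equiv Function

variable {Ω : Type u}

lemma perm_isPeriodicPt_iff (σ : Equiv.Perm Ω) (x : Ω) (k : ℕ) :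
    Function.IsPeriodicPt ⇑σ k x ↔ (σ ^ k) x = x := by
  rw [Function.IsPeriodicPt, Function.IsFixedPt, Equiv.Perm.iterate_eq_pow]

lemma mp_eq_of_iff {σ τ : Equiv.Perm Ω} {x y : Ω}
    (h : ∀ k : ℕ, (σ ^ k) x = x ↔ (τ ^ k) y = y) :
    Function.minimalPeriod ⇑σ x = Function.minimalPeriod ⇑τ y := by
  apply Nat.dvd_antisymm
  · exact ((perm_isPeriodicPt_iff σ x _).2 ((h _).2
      ((perm_isPeriodicPt_iff τ y _).1 (Function.isPeriodicPt_minimalPeriod _ _)))).minimalPeriod_dvd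
  · exact ((perm_isPeriodicPt_iff τ y _).2 ((h _).1
      ((perm_isPeriodicPt_iff σ x _).1 (Function.isPeriodicPt_minimalPeriod _ _)))).minimalPeriod_dvd

lemma mp_eq_of_dvd_iff {σ : Equiv.Perm Ω} {x : Ω} {d : ℕ}
    (h : ∀ k : ℕ, (σ ^ k) x = x ↔ d ∣ k) :
    Function.minimalPeriod ⇑σ x = d := by
  apply Nat.dvd_antisymm
  · exact ((perm_isPeriodicPt_iff σ x d).2 ((h d).2 dvd_rfl)).minimalPeriod_dvd
  · exact (h _).1 ((perm_isPeriodicPt_iff σ x _).1 (Function.isPeriodicPt_minimalPeriod _ _))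

lemma pow_eq_iff_mp_dvd (σ : Equiv.Perm Ω) (x : Ω) (k : ℕ) :
    (σ ^ k) x = x ↔ Function.minimalPeriod ⇑σ x ∣ k := by
  rw [← perm_isPeriodicPt_iff]
  exact Function.isPeriodicPt_iff_minimalPeriod_dvd

lemma apply_pow_eq_iff (h : Equiv.Perm Ω) (k : ℕ) (x : Ω) :
    h ((h ^ k) x) = (h ^ k) x ↔ h x = x :=
  (Equiv.Perm.SameCycle.apply_eq_self_iff
    (⟨(k : ℤ), by rw [zpow_natCast]⟩ : h.SameCycle x ((h ^ k) x))).symm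

lemma pow_mod_apply (σ : Equiv.Perm Ω) {d : ℕ} {x : Ω} (hx : (σ ^ d) x = x) (a : ℕ) :
    (σ ^ a) x = (σ ^ (a % d)) x := by
  have h1 : ((σ ^ d) ^ (a / d)) x = x := Equiv.Perm.pow_apply_eq_self_of_apply_eq_self hx _
  calc (σ ^ a) x = (σ ^ (a % d + d * (a / d))) x := by rw [Nat.mod_add_div]
    _ = (σ ^ (a % d)) (((σ ^ d) ^ (a / d)) x) := by
        rw [pow_add, pow_mul, Equiv.Perm.mul_apply]
    _ = (σ ^ (a % d)) x := by rw [h1]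

lemma zpow_reduce {σ : Equiv.Perm Ω} {d : ℕ} (hd : 0 < d) {x : Ω} (hx : (σ ^ d) x = x) (b : ℤ) :
    ∃ k : ℕ, k < d ∧ (σ ^ b) x = (σ ^ k) x := by
  have hd0 : (d : ℤ) ≠ 0 := by exact_mod_cast hd.ne'
  refine ⟨(b % d).toNat, ?_, ?_⟩
  · have h1 := Int.emod_lt_of_pos b (by exact_mod_cast hd : (0:ℤ) < d)
    have h2 := Int.emod_nonneg b hd0
    omega
  · have hmod : (σ ^ ((d : ℤ) * (b / d))) x = x := by
      rw [zpow_mul]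
      exact Equiv.Perm.zpow_apply_eq_self_of_apply_eq_self (by rw [zpow_natCast]; exact hx) _
    calc (σ ^ b) x = (σ ^ (b % d)) ((σ ^ ((d : ℤ) * (b / d))) x) := by
          rw [← Equiv.Perm.mul_apply, ← zpow_add, Int.emod_add_mul_ediv]
      _ = (σ ^ (b % d)) x := by rw [hmod]
      _ = (σ ^ (b % d).toNat) x := by
          rw [← zpow_natCast σ (b % d).toNat, Int.toNat_of_nonneg (Int.emod_nonneg b hd0)]

open scoped Classical in
/-- Restriction of a permutation to an invariant set, extended by the identity. -/
noncomputable def restrictPerm (φ : Equiv.Perm Ω) (S : Set Ω) (hS : ∀ x, φ x ∈ S ↔ x ∈ S) :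
    Equiv.Perm Ω where
  toFun x := if x ∈ S then φ x else x
  invFun x := if x ∈ S then φ.symm x else x
  left_inv x := by
    by_cases hx : x ∈ S
    · simp only [hx, if_pos, (hS x).2 hx, Equiv.symm_apply_apply]
    · simp only [hx, if_neg, if_false]
  right_inv x := by
    by_cases hx : x ∈ S
    · have h1 : φ.symm x ∈ S := by
        rw [← hS (φ.symm x), Equiv.apply_symm_apply]; exact hx
      simp only [hx, h1, if_pos, Equiv.apply_symm_apply]
    · simp only [hx, if_neg, if_false]

open scoped Classical in
lemma restrictPerm_apply (φ : Equiv.Perm Ω) (S : Set Ω) (hS : ∀ x, φ x ∈ S ↔ x ∈ S) (x : Ω) :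
    restrictPerm φ S hS x = if x ∈ S then φ x else x := by
  simp only [restrictPerm, Equiv.coe_fn_mk]

open scoped Classical in
lemma restrictPerm_inv_apply (φ : Equiv.Perm Ω) (S : Set Ω) (hS : ∀ x, φ x ∈ S ↔ x ∈ S) (x : Ω) :
    (restrictPerm φ S hS)⁻¹ x = if x ∈ S then φ⁻¹ x else x := by
  simp only [restrictPerm, Equiv.Perm.inv_def, Equiv.coe_fn_symm_mk]

lemma pow_mem_iff {φ : Equiv.Perm Ω} {S : Set Ω} (hS : ∀ x, φ x ∈ S ↔ x ∈ S) (k : ℕ) (x : Ω) :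
    (φ ^ k) x ∈ S ↔ x ∈ S := by
  induction k with
  | zero => simp
  | succ k ih => rw [pow_succ', Equiv.Perm.mul_apply, hS, ih]

open scoped Classical in
lemma restrictPerm_pow_apply (φ : Equiv.Perm Ω) (S : Set Ω) (hS : ∀ x, φ x ∈ S ↔ x ∈ S)
    (k : ℕ) (x : Ω) :
    ((restrictPerm φ S hS) ^ k) x = if x ∈ S then (φ ^ k) x else x := by
  induction k with
  | zero => simp
  | succ k ih =>
    rw [pow_succ', Equiv.Perm.mul_apply, ih]
    by_cases hx : x ∈ S
    · rw [if_pos hx, if_pos hx, restrictPerm_apply, if_pos ((pow_mem_iff hS k x).2 hx),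
        ← Equiv.Perm.mul_apply, ← pow_succ']
    · rw [if_neg hx, if_neg hx, restrictPerm_apply, if_neg hx]

/-- The core lemma: a permutation all of whose non-fixed points have minimal period exactly
`d ∣ n`, whose support has cardinality `#Ω`, lies in `Sset Ω #Ω n`. -/
lemma memSset [Infinite Ω] {n d : ℕ} (hn : 0 < n) (hd2 : 2 ≤ d) (hdn : d ∣ n)
    (h : Equiv.Perm Ω)
    (hper : ∀ x : Ω, h x ≠ x → Function.minimalPeriod ⇑h x = d)
    (hcard : #({x : Ω | h x ≠ x}) = #Ω) :
    h ∈ Sset Ω (#Ω) n := by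
  classical
  have hdpos : 0 < d := by omega
  set M : Set Ω := {x : Ω | h x ≠ x} with hMdef
  -- orbit representatives
  let s : Setoid Ω := Equiv.Perm.SameCycle.setoid h
  let q : Ω → Ω := fun x => (Quotient.mk s x).out
  have hq : ∀ x, h.SameCycle (q x) x := by
    intro x
    exact Quotient.exact (Quotient.out_eq (Quotient.mk s x))
  have hqc : ∀ {x y : Ω}, h.SameCycle x y → q x = q y := by
    intro x y hxy
    have : Quotient.mk s x = Quotient.mk s y := Quotient.sound hxy
    simp only [q, this]
  have hMpow : ∀ (x : Ω) (k : ℕ), x ∈ M → (h ^ k) x ∈ M := by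
    intro x k hx hc
    exact hx ((apply_pow_eq_iff h k x).1 hc)
  set R : Set Ω := {r : Ω | q r = r ∧ r ∈ M} with hRdef
  have hqmem : ∀ x ∈ M, q x ∈ R := by
    intro x hx
    refine ⟨hqc (hq x), ?_⟩
    intro hc
    exact hx (((hq x).apply_eq_self_iff).1 hc)
  have hRM : ∀ r ∈ R, r ∈ M := fun r hr => hr.2
  have hperR : ∀ r ∈ R, ∀ k : ℕ, (h ^ k) r = r ↔ d ∣ k := by
    intro r hr k
    rw [pow_eq_iff_mp_dvd, hper r hr.2]
  -- every support point is reached from its representative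
  have horb : ∀ x ∈ M, ∃ k : ℕ, k < d ∧ x = (h ^ k) (q x) := by
    intro x hx
    obtain ⟨b, hb⟩ := hq x
    have hdq : (h ^ d) (q x) = q x := (hperR _ (hqmem x hx) d).2 dvd_rfl
    obtain ⟨k, hk, he⟩ := zpow_reduce hdpos hdq b
    exact ⟨k, hk, by rw [← he, hb]⟩
  -- injectivity of (r, k) ↦ h^k r
  have hkinj : ∀ r ∈ M, ∀ a b : ℕ, a < d → b < d → (h ^ a) r = (h ^ b) r → a = b := by
    have key : ∀ r ∈ M, ∀ a b : ℕ, a ≤ b → a < d → b < d → (h ^ a) r = (h ^ b) r → a = b := by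
      intro r hr a b hab ha hb heq
      have h1 : (h ^ (b - a)) ((h ^ a) r) = (h ^ a) r := by
        rw [← Equiv.Perm.mul_apply, ← pow_add, Nat.sub_add_cancel hab]
        exact heq.symm
      have h2 : (h ^ a) r ∈ M := hMpow r a hr
      have h3 : d ∣ b - a := by
        have := (pow_eq_iff_mp_dvd h ((h ^ a) r) (b - a)).1 h1
        rwa [hper _ h2] at this
      have h4 : b - a = 0 := by
        rcases Nat.eq_zero_or_pos (b - a) with h5 | h5
        · exact h5
        · exact absurd (Nat.le_of_dvd h5 h3) (by omega)
      omega
    intro r hr a b ha hb heq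
    rcases le_total a b with hab | hab
    · exact key r hr a b hab ha hb heq
    · exact (key r hr b a hab hb ha heq.symm).symm
  have hinj : ∀ r1 ∈ R, ∀ r2 ∈ R, ∀ k1 k2 : ℕ, k1 < d → k2 < d →
      (h ^ k1) r1 = (h ^ k2) r2 → r1 = r2 ∧ k1 = k2 := by
    intro r1 hr1 r2 hr2 k1 k2 hk1 hk2 heq
    have h1 : (h ^ (k1 : ℤ)) r1 = (h ^ (k2 : ℤ)) r2 := by
      rw [zpow_natCast, zpow_natCast, heq]
    have hsc : h.SameCycle r1 r2 := by
      refine ⟨(k1 : ℤ) - k2, ?_⟩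
      calc (h ^ ((k1 : ℤ) - k2)) r1 = (h ^ (-(k2 : ℤ))) ((h ^ (k1 : ℤ)) r1) := by
            rw [← Equiv.Perm.mul_apply, ← zpow_add, neg_add_eq_sub, sub_eq_add_neg, add_comm,
              neg_add_eq_sub]
        _ = (h ^ (-(k2 : ℤ))) ((h ^ (k2 : ℤ)) r2) := by rw [h1]
        _ = r2 := by rw [← Equiv.Perm.mul_apply, ← zpow_add, neg_add_cancel, zpow_zero,
              Equiv.Perm.one_apply]
    have hr : r1 = r2 := by rw [← hr1.1, ← hr2.1]; exact hqc hsc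
    subst hr
    exact ⟨rfl, hkinj r1 hr1.2 k1 k2 hk1 hk2 heq⟩
  -- cardinal bookkeeping
  set m : ℕ := n / d with hmdef
  have hmd : m * d = n := Nat.div_mul_cancel hdn
  have hmpos : 0 < m := Nat.div_pos (Nat.le_of_dvd hn hdn) hdpos
  have haleph : ℵ₀ ≤ #Ω := Cardinal.aleph0_le_mk Ω
  -- the bijection R × Fin d ≃ M
  have hbij : Nonempty ((↥R × Fin d) ≃ ↥M) := by
    refine ⟨Equiv.ofBijective
      (fun p : ↥R × Fin d => (⟨(h ^ (p.2 : ℕ)) (p.1 : Ω), hMpow _ _ (hRM _ p.1.2)⟩ : ↥M))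
      ⟨?_, ?_⟩⟩
    · rintro ⟨⟨r1, hr1⟩, k1⟩ ⟨⟨r2, hr2⟩, k2⟩ hp
      simp only [Subtype.mk.injEq] at hp
      obtain ⟨he1, he2⟩ := hinj r1 hr1 r2 hr2 k1 k2 k1.2 k2.2 hp
      simp only [Prod.mk.injEq, Subtype.mk.injEq]
      exact ⟨he1, Fin.ext he2⟩
    · rintro ⟨x, hx⟩
      obtain ⟨k, hk, he⟩ := horb x hx
      exact ⟨⟨⟨q x, hqmem x hx⟩, ⟨k, hk⟩⟩, by simp only [Subtype.mk.injEq]; exact he.symm⟩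
  have hRd : #↥R * (d : Cardinal) = #Ω := by
    have h1 : #(↥R × Fin d) = #↥M := Cardinal.mk_congr hbij.some
    rw [Cardinal.mk_prod, Cardinal.lift_id', Cardinal.mk_fin, Cardinal.lift_natCast] at h1
    rw [h1]
    exact hcard
  have hR : #↥R = #Ω := by
    by_cases hfin : #↥R < ℵ₀
    · exfalso
      have h1 : #↥R * (d : Cardinal) < ℵ₀ :=
        Cardinal.mul_lt_aleph0 hfin (Cardinal.nat_lt_aleph0 d)
      rw [hRd] at h1
      exact absurd haleph (not_le.2 h1)
    · push_neg at hfin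
      rw [← hRd, Cardinal.mul_eq_left hfin
        (le_trans (le_of_lt (Cardinal.nat_lt_aleph0 d)) hfin)
        (by exact_mod_cast hdpos.ne')]
  have hOm : #(Ω × Fin m) = #↥R := by
    rw [Cardinal.mk_prod, Cardinal.lift_id', Cardinal.mk_fin, Cardinal.lift_natCast, hR,
      Cardinal.mul_eq_left haleph (le_trans (le_of_lt (Cardinal.nat_lt_aleph0 m)) haleph)
        (by exact_mod_cast hmpos.ne')]
  obtain ⟨e⟩ : Nonempty ((Ω × Fin m) ≃ ↥R) := Cardinal.eq.1 hOm
  -- the pieces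
  set V : Ω → Set Ω :=
    fun ω => {y : Ω | ∃ (j : Fin m) (k : Fin d), y = (h ^ (k : ℕ)) ((e (ω, j) : Ω))} with hVdef
  refine ⟨Ω, V, ⟨?_, ?_, ?_⟩, rfl, ?_⟩
  · -- invariance
    rintro ω x ⟨j, k, rfl⟩
    have hdr : (h ^ d) ((e (ω, j) : Ω)) = (e (ω, j) : Ω) := (hperR _ (e (ω, j)).2 d).2 dvd_rfl
    refine ⟨j, ⟨((k : ℕ) + 1) % d, Nat.mod_lt _ hdpos⟩, ?_⟩
    calc h ((h ^ (k : ℕ)) ((e (ω, j) : Ω))) = (h ^ ((k : ℕ) + 1)) ((e (ω, j) : Ω)) := by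
          rw [pow_succ', Equiv.Perm.mul_apply]
      _ = (h ^ (((k : ℕ) + 1) % d)) ((e (ω, j) : Ω)) := pow_mod_apply h hdr _
  · -- pairwise disjoint
    intro ω1 ω2 hne
    simp only [Function.onFun]
    rw [Set.disjoint_left]
    rintro x ⟨j1, k1, rfl⟩ ⟨j2, k2, he2⟩
    obtain ⟨he, -⟩ := hinj _ (e (ω1, j1)).2 _ (e (ω2, j2)).2 k1 k2 k1.2 k2.2 he2
    have : (ω1, j1) = (ω2, j2) := e.injective (Subtype.ext he)
    exact hne (congrArg Prod.fst this)
  · -- union = support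
    ext x
    simp only [Set.mem_iUnion, Set.mem_setOf_eq]
    constructor
    · rintro ⟨ω, j, k, rfl⟩
      exact hMpow _ _ (hRM _ (e (ω, j)).2)
    · intro hx
      obtain ⟨k, hk, he'⟩ := horb x hx
      set p := e.symm ⟨q x, hqmem x hx⟩ with hp
      refine ⟨p.1, p.2, ⟨k, hk⟩, ?_⟩
      have : e (p.1, p.2) = ⟨q x, hqmem x hx⟩ := by
        rw [hp]
        simp only [Prod.mk.eta, Equiv.apply_symm_apply]
      rw [this]
      exact he'
  · -- cardinality of each piece
    intro ω
    have hbij2 : (Fin m × Fin d) ≃ ↥(V ω) := by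
      refine Equiv.ofBijective
        (fun p : Fin m × Fin d => (⟨(h ^ (p.2 : ℕ)) ((e (ω, p.1) : Ω)), p.1, p.2, rfl⟩ : ↥(V ω)))
        ⟨?_, ?_⟩
      · rintro ⟨j1, k1⟩ ⟨j2, k2⟩ hp
        simp only [Subtype.mk.injEq] at hp
        obtain ⟨he, hk⟩ := hinj _ (e (ω, j1)).2 _ (e (ω, j2)).2 k1 k2 k1.2 k2.2 hp
        have : (ω, j1) = (ω, j2) := e.injective (Subtype.ext he)
        simp only [Prod.mk.injEq]
        exact ⟨(congrArg Prod.snd this), Fin.ext hk⟩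
      · rintro ⟨y, j, k, rfl⟩
        exact ⟨(j, k), rfl⟩
    have h1 : Cardinal.lift.{u} #(Fin m × Fin d) = Cardinal.lift.{0} #↥(V ω) :=
      Cardinal.lift_mk_eq'.2 ⟨hbij2⟩
    rw [Cardinal.mk_prod, Cardinal.mk_fin, Cardinal.mk_fin, Cardinal.lift_natCast,
      Cardinal.lift_natCast, Cardinal.lift_mul, Cardinal.lift_natCast, Cardinal.lift_natCast,
      Cardinal.lift_id'] at h1
    rw [← h1, ← Nat.cast_mul, hmd]

open Fin.NatCast in
/-- On any set `C` of full cardinality there is a permutation with support exactly `C`,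
all of whose orbits have size exactly `d`. -/
lemma exists_g [Infinite Ω] {d : ℕ} (hd2 : 2 ≤ d) (C : Set Ω) (hC : #↥C = #Ω) :
    ∃ g : Equiv.Perm Ω, {x : Ω | g x ≠ x} = C ∧
      ∀ x ∈ C, Function.minimalPeriod ⇑g x = d := by
  classical
  obtain ⟨m, rfl⟩ : ∃ m, d = m + 1 := ⟨d - 1, by omega⟩
  have haleph : ℵ₀ ≤ #Ω := Cardinal.aleph0_le_mk Ω
  have hOm : #(Ω × Fin (m + 1)) = #↥C := by
    rw [Cardinal.mk_prod, Cardinal.lift_id', Cardinal.mk_fin, Cardinal.lift_natCast, hC,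
      Cardinal.mul_eq_left haleph (le_trans (le_of_lt (Cardinal.nat_lt_aleph0 (m + 1))) haleph)
        (by exact_mod_cast Nat.succ_ne_zero m)]
  obtain ⟨ψ⟩ : Nonempty ((Ω × Fin (m + 1)) ≃ {x : Ω // x ∈ C}) := Cardinal.eq.1 hOm
  set π : Equiv.Perm (Ω × Fin (m + 1)) :=
    Equiv.prodCongr (Equiv.refl Ω) (finRotate (m + 1)) with hπdef
  have hπ : ∀ (k : ℕ) (a : Ω × Fin (m + 1)), (π ^ k) a = (a.1, a.2 + (k : Fin (m + 1))) := by
    intro k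
    induction k with
    | zero => intro a; simp
    | succ k ih =>
      intro a
      rw [pow_succ', Equiv.Perm.mul_apply, ih]
      simp only [hπdef, Equiv.prodCongr_apply, Equiv.coe_refl, Prod.map, id_eq,
        finRotate_succ_apply]
      rw [Nat.cast_add, Nat.cast_one, add_assoc, add_comm (k : Fin (m+1)) 1]
  have hπfix : ∀ (k : ℕ) (a : Ω × Fin (m + 1)), (π ^ k) a = a ↔ (m + 1) ∣ k := by
    intro k a
    rw [hπ k a, Prod.ext_iff]
    simp only [true_and]
    constructor
    · intro hk
      replace hk := add_eq_left.1 hk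
      exact (Fin.natCast_eq_zero).1 hk
    · intro hk
      rw [(Fin.natCast_eq_zero).2 hk, add_zero]
  set g : Equiv.Perm Ω := π.extendDomain ψ with hgdef
  have hgpow : ∀ (k : ℕ) (a : Ω × Fin (m + 1)), (g ^ k) (ψ a : Ω) = ((ψ ((π ^ k) a)) : Ω) := by
    intro k
    induction k with
    | zero => intro a; simp
    | succ k ih =>
      intro a
      rw [pow_succ', Equiv.Perm.mul_apply, ih, hgdef]
      rw [Equiv.Perm.extendDomain_apply_subtype π ψ (ψ ((π ^ k) a)).2]
      congr 1
      rw [Equiv.symm_apply_apply, ← Equiv.Perm.mul_apply, ← pow_succ']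
  have hgfix : ∀ x ∈ C, g x ≠ x := by
    intro x hx hc
    set a := ψ.symm ⟨x, hx⟩ with ha
    have hx' : x = (ψ a : Ω) := by rw [ha, Equiv.apply_symm_apply]
    have h1 := hgpow 1 a
    rw [pow_one, pow_one] at h1
    rw [hx', h1] at hc
    have h2 : (π ^ 1) a = a := by
      rw [pow_one]
      exact ψ.injective (Subtype.ext hc)
    have h4 := (hπfix 1 a).1 h2
    have := Nat.le_of_dvd one_pos h4
    omega
  have hgfix' : ∀ x ∉ C, g x = x := by
    intro x hx
    exact Equiv.Perm.extendDomain_apply_not_subtype π ψ hx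
  refine ⟨g, ?_, ?_⟩
  · ext x
    simp only [Set.mem_setOf_eq]
    constructor
    · intro hx
      by_contra hc
      exact hx (hgfix' x hc)
    · intro hx
      exact hgfix x hx
  · intro x hx
    apply mp_eq_of_dvd_iff
    intro k
    have hx' : x = (ψ (ψ.symm ⟨x, hx⟩) : Ω) := by rw [Equiv.apply_symm_apply]
    rw [hx', hgpow k (ψ.symm ⟨x, hx⟩)]
    rw [← hπfix k (ψ.symm ⟨x, hx⟩)]
    constructor
    · intro hc
      apply ψ.injective
      apply Subtype.ext
      exact hc
    · intro hc
      rw [hc]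

/-- Any permutation of `n`-th power one, all of whose non-fixed points have the same
minimal period, lies in the closure of `Sset Ω #Ω n`. -/
lemma memClosure_const_period [Infinite Ω] {n d : ℕ} (hn : 0 < n)
    (h : Equiv.Perm Ω) (hhn : h ^ n = 1)
    (hper : ∀ x : Ω, h x ≠ x → Function.minimalPeriod ⇑h x = d) :
    h ∈ Subgroup.closure (Sset Ω (#Ω) n) := by
  classical
  by_cases htriv : ∀ x, h x = x
  · have h1 : h = 1 := Equiv.ext fun x => htriv x
    rw [h1]; exact one_mem _
  push_neg at htriv
  obtain ⟨x0, hx0⟩ := htriv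
  have hper0 : Function.minimalPeriod ⇑h x0 = d := hper x0 hx0
  have hpp : Function.IsPeriodicPt ⇑h n x0 := (perm_isPeriodicPt_iff h x0 n).2 (by rw [hhn]; rfl)
  have hdn : d ∣ n := hper0 ▸ hpp.minimalPeriod_dvd
  have hd2 : 2 ≤ d := by
    have h1 : 0 < d := hper0 ▸ Function.IsPeriodicPt.minimalPeriod_pos hn hpp
    have h2 : d ≠ 1 := by
      intro h1'
      apply hx0
      have h3 := Function.isPeriodicPt_minimalPeriod ⇑h x0
      rw [hper0, h1'] at h3
      exact h3
    omega
  set M : Set Ω := {x : Ω | h x ≠ x} with hMdef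
  by_cases hc : #↥M = #Ω
  · exact Subgroup.subset_closure (memSset hn hd2 hdn h hper hc)
  · have hlt : #↥M < #Ω := lt_of_le_of_ne (Cardinal.mk_set_le M) hc
    have hCc : #↥(Mᶜ) = #Ω := Cardinal.mk_compl_of_infinite M hlt
    obtain ⟨g, hgsupp, hgper⟩ := exists_g hd2 Mᶜ hCc
    have hgC : ∀ x, g x ≠ x ↔ x ∈ Mᶜ := by
      intro x
      constructor
      · intro hx; rw [← hgsupp]; exact hx
      · intro hx; have : x ∈ {y : Ω | g y ≠ y} := by rw [hgsupp]; exact hx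
        exact this
    have hgfixM : ∀ x ∈ M, g x = x := by
      intro x hx
      by_contra hgx
      exact ((hgC x).1 hgx) hx
    have hhfixC : ∀ x ∈ Mᶜ, h x = x := fun x hx => not_not.1 hx
    -- powers of h*g on M and on Mᶜ
    have hpowM : ∀ x ∈ M, ∀ k : ℕ, ((h * g) ^ k) x = (h ^ k) x := by
      intro x hx k
      induction k with
      | zero => simp
      | succ k ih =>
        rw [pow_succ', Equiv.Perm.mul_apply, ih, pow_succ', Equiv.Perm.mul_apply,
          Equiv.Perm.mul_apply]
        congr 1
        exact hgfixM _ (fun hfix => hx ((apply_pow_eq_iff h k x).1 hfix))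
    have hpowC : ∀ x ∈ Mᶜ, ∀ k : ℕ, ((h * g) ^ k) x = (g ^ k) x := by
      intro x hx k
      induction k with
      | zero => simp
      | succ k ih =>
        rw [pow_succ', Equiv.Perm.mul_apply, ih, pow_succ', Equiv.Perm.mul_apply,
          Equiv.Perm.mul_apply]
        have hgx : g x ≠ x := (hgC x).2 hx
        have h1 : g ((g ^ k) x) ≠ (g ^ k) x := by
          intro hfix
          exact hgx ((apply_pow_eq_iff g k x).1 hfix)
        have h2 : g ((g ^ k) x) ∈ Mᶜ := by
          rw [← hgC]
          intro hfix
          apply hgx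
          have : g ((g ^ k) x) = (g ^ (k + 1)) x := by
            rw [pow_succ', Equiv.Perm.mul_apply]
          rw [this] at hfix
          exact (apply_pow_eq_iff g (k + 1) x).1 hfix
        exact hhfixC _ h2
    have hsupp : {x : Ω | (h * g) x ≠ x} = Set.univ := by
      ext x
      simp only [Set.mem_setOf_eq, Set.mem_univ, iff_true]
      by_cases hx : x ∈ M
      · have := hpowM x hx 1
        rw [pow_one, pow_one] at this
        rw [this]; exact hx
      · have := hpowC x hx 1
        rw [pow_one, pow_one] at this
        rw [this]; exact (hgC x).2 hx
    have hpershg : ∀ x : Ω, (h * g) x ≠ x → Function.minimalPeriod ⇑(h * g) x = d := by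
      intro x _
      by_cases hx : x ∈ M
      · exact (mp_eq_of_iff fun k => by rw [hpowM x hx k]).trans (hper x hx)
      · exact (mp_eq_of_iff fun k => by rw [hpowC x hx k]).trans (hgper x hx)
    have hcard_univ : #({x : Ω | (h * g) x ≠ x}) = #Ω := by
      rw [hsupp, Cardinal.mk_univ]
    have h1 : (h * g) ∈ Sset Ω (#Ω) n := memSset hn hd2 hdn _ hpershg hcard_univ
    have h2 : g ∈ Sset Ω (#Ω) n := by
      refine memSset hn hd2 hdn g (fun x hx => hgper x ((hgC x).1 hx)) ?_
      rw [hgsupp]; exact hCc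
    have h3 : h = (h * g) * g⁻¹ := by group
    rw [h3]
    exact mul_mem (Subgroup.subset_closure h1) (inv_mem (Subgroup.subset_closure h2))

/-- Main induction: any permutation `φ` with `φ ^ n = 1` and all minimal periods of
non-fixed points at most `k` lies in the closure of `Sset Ω #Ω n`. -/
lemma memClosure_of_bound [Infinite Ω] {n : ℕ} (hn : 0 < n) :
    ∀ k : ℕ, ∀ φ : Equiv.Perm Ω, φ ^ n = 1 →
      (∀ x : Ω, φ x ≠ x → Function.minimalPeriod ⇑φ x ≤ k) →
      φ ∈ Subgroup.closure (Sset Ω (#Ω) n) := by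
  intro k
  induction k with
  | zero =>
    intro φ hφ hb
    have h1 : φ = 1 := by
      apply Equiv.ext
      intro x
      by_contra hx
      have h2 := hb x hx
      have hpp : Function.IsPeriodicPt ⇑φ n x :=
        (perm_isPeriodicPt_iff φ x n).2 (by rw [hφ]; rfl)
      have h3 := Function.IsPeriodicPt.minimalPeriod_pos hn hpp
      omega
    rw [h1]; exact one_mem _
  | succ k ih =>
    intro φ hφ hb
    classical
    set S : Set Ω := {x : Ω | Function.minimalPeriod ⇑φ x = k + 1 ∧ φ x ≠ x} with hSdef
    have hmp_apply : ∀ x : Ω,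
        Function.minimalPeriod ⇑φ (φ x) = Function.minimalPeriod ⇑φ x := by
      intro x
      apply mp_eq_of_iff
      intro j
      have h1 : (φ ^ j) (φ x) = φ ((φ ^ j) x) := by
        rw [← Equiv.Perm.mul_apply, ← Equiv.Perm.mul_apply, ← pow_succ, ← pow_succ']
      rw [h1]
      exact ⟨fun hc => φ.injective hc, fun hc => by rw [hc]⟩
    have hS : ∀ x, φ x ∈ S ↔ x ∈ S := by
      intro x
      simp only [hSdef, Set.mem_setOf_eq, hmp_apply]
      constructor
      · rintro ⟨h1, h2⟩
        exact ⟨h1, fun hc => h2 (by rw [hc]; exact hc)⟩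
      · rintro ⟨h1, h2⟩
        exact ⟨h1, fun hc => h2 (φ.injective hc)⟩
    set hp : Equiv.Perm Ω := restrictPerm φ S hS with hpdef
    have hppow := restrictPerm_pow_apply φ S hS
    have hpn : hp ^ n = 1 := by
      apply Equiv.ext
      intro x
      rw [hppow]
      simp only [Equiv.Perm.one_apply]
      split
      · rw [hφ]; rfl
      · rfl
    have hpd : ∀ x : Ω, hp x ≠ x → Function.minimalPeriod ⇑hp x = k + 1 := by
      intro x hx
      have hxS : x ∈ S := by
        by_contra hxS
        apply hx
        rw [hpdef, restrictPerm_apply, if_neg hxS]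
      have h1 : Function.minimalPeriod ⇑hp x = Function.minimalPeriod ⇑φ x :=
        mp_eq_of_iff (fun j => by rw [hppow, if_pos hxS])
      rw [h1]
      exact hxS.1
    have hclos1 : hp ∈ Subgroup.closure (Sset Ω (#Ω) n) :=
      memClosure_const_period hn hp hpn hpd
    set r : Equiv.Perm Ω := φ * hp⁻¹ with hrdef
    have hrapp : ∀ x : Ω, r x = if x ∈ S then x else φ x := by
      intro x
      rw [hrdef, Equiv.Perm.mul_apply, hpdef, restrictPerm_inv_apply]
      by_cases hx : x ∈ S
      · rw [if_pos hx, if_pos hx, Equiv.Perm.inv_def, Equiv.apply_symm_apply]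
      · rw [if_neg hx, if_neg hx]
    have hrpow : ∀ (j : ℕ) (x : Ω), (r ^ j) x = if x ∈ S then x else (φ ^ j) x := by
      intro j
      induction j with
      | zero => intro x; simp
      | succ j ihj =>
        intro x
        rw [pow_succ', Equiv.Perm.mul_apply, ihj]
        by_cases hx : x ∈ S
        · rw [if_pos hx, if_pos hx, hrapp, if_pos hx]
        · rw [if_neg hx, if_neg hx, hrapp, if_neg ((pow_mem_iff hS j x).not.2 hx),
            ← Equiv.Perm.mul_apply, ← pow_succ']
    have hrn : r ^ n = 1 := by
      apply Equiv.ext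
      intro x
      rw [hrpow]
      simp only [Equiv.Perm.one_apply]
      split
      · rfl
      · rw [hφ]; rfl
    have hrb : ∀ x : Ω, r x ≠ x → Function.minimalPeriod ⇑r x ≤ k := by
      intro x hx
      have hxS : x ∉ S := fun hxS => hx (by rw [hrapp, if_pos hxS])
      have hφx : φ x ≠ x := by
        intro hfix
        apply hx
        rw [hrapp, if_neg hxS, hfix]
      have heq : Function.minimalPeriod ⇑r x = Function.minimalPeriod ⇑φ x :=
        mp_eq_of_iff (fun j => by rw [hrpow, if_neg hxS])
      have h1 := hb x hφx
      have h2 : Function.minimalPeriod ⇑φ x ≠ k + 1 := fun hc => hxS ⟨hc, hφx⟩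
      rw [heq]
      omega
    have hclos2 := ih r hrn hrb
    have hfact : φ = r * hp := by rw [hrdef]; group
    rw [hfact]
    exact mul_mem hclos2 hclos1

end SsetAux

theorem orderN_le_closure_Sset {Ω : Type u} [Infinite Ω] (n : ℕ) (hn : 2 ≤ n) :
    Subgroup.closure {f : Equiv.Perm Ω | orderOf f = n} ≤
      Subgroup.closure (Sset Ω (#Ω) n) := by
  rw [Subgroup.closure_le]
  intro f hf
  have hf' : orderOf f = n := hf
  have hn0 : 0 < n := by omega
  have hfn : f ^ n = 1 := by rw [← hf']; exact pow_orderOf_eq_one f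
  have hb : ∀ x : Ω, f x ≠ x → Function.minimalPeriod ⇑f x ≤ n := by
    intro x _
    have hpp : Function.IsPeriodicPt ⇑f n x :=
      (SsetAux.perm_isPeriodicPt_iff f x n).2 (by rw [hfn]; rfl)
    exact Nat.le_of_dvd hn0 hpp.minimalPeriod_dvd
  exact SsetAux.memClosure_of_bound hn0 n f hfn hb
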